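/- For every ε > 0 there exists a constant C_ε > 0, depending only on ε and η, such that for all x, y > 0 and all t ≥ 0, E[ |X^x_t − X^y_t| ] ≤ C_ε |x − y| + ε ( x + y + t^η ). (One may take C_ε = 2^{η²} ((η−1)/ε)^{η−1}.) -/

import Mathlib

open MeasureTheory Real Set Filter
open scoped ENNReal NNReal

private lemma aux_exp_rpow (w r : ℝ) : (Real.exp w) ^ r = Real.exp (w * r) := by
  rw [Real.rpow_def_of_pos (Real.exp_pos w), Real.log_exp]

private lemma aux_diff {p a b : ℝ} (hp : 1 ≤ p) (hb : 0 ≤ b) (hba : b ≤ a) :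
    a ^ p - b ^ p ≤ p * a ^ (p - 1) * (a - b) := by
  rcases eq_or_lt_of_le (hb.trans hba) with ha | ha
  · have hb0 : b = 0 := le_antisymm (ha ▸ hba) hb
    subst hb0
    rw [← ha]
    simp
  · have hr0 : 0 ≤ b / a := div_nonneg hb ha.le
    have hbern := one_add_mul_self_le_rpow_one_add (s := b / a - 1) (by linarith) hp
    rw [add_sub_cancel] at hbern
    -- hbern : 1 + p * (b/a - 1) ≤ (b/a) ^ p
    have h1 : (b / a) ^ p = b ^ p / a ^ p := Real.div_rpow hb ha.le p
    have h2 : a ^ p = a ^ (p - 1) * a := by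
      rw [← Real.rpow_add_one ha.ne' (p - 1), sub_add_cancel]
    have hap : 0 < a ^ p := Real.rpow_pos_of_pos ha p
    have hap1 : 0 < a ^ (p - 1) := Real.rpow_pos_of_pos ha _
    have hkey : a ^ p * (1 + p * (b / a - 1)) ≤ b ^ p := by
      calc a ^ p * (1 + p * (b / a - 1)) ≤ a ^ p * (b / a) ^ p :=
            mul_le_mul_of_nonneg_left hbern hap.le
        _ = b ^ p := by rw [h1]; field_simp
    have hdiv : a ^ p * (b / a) = a ^ (p - 1) * b := by
      rw [h2]; field_simp
    nlinarith [hkey, hdiv]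

private lemma aux_sub {q x y : ℝ} (hq0 : 0 ≤ q) (hq1 : q ≤ 1) (hy : 0 ≤ y) (hyx : y ≤ x) :
    x ^ q - y ^ q ≤ (x - y) ^ q := by
  have hxy : 0 ≤ x - y := sub_nonneg.2 hyx
  have h := NNReal.rpow_add_le_add_rpow (y.toNNReal) ((x - y).toNNReal) hq0 hq1
  have hsum : y.toNNReal + (x - y).toNNReal = x.toNNReal := by
    rw [← Real.toNNReal_add hy hxy]
    congr 1
    ring
  rw [hsum] at h
  have h' := NNReal.coe_le_coe.2 h
  push_cast [NNReal.coe_rpow] at h'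
  rw [Real.coe_toNNReal _ (hy.trans hyx), Real.coe_toNNReal _ hy, Real.coe_toNNReal _ hxy] at h'
  linarith

private lemma aux_two {p a b : ℝ} (hp : 1 ≤ p) (ha : 0 ≤ a) (hb : 0 ≤ b) :
    (a + b) ^ p ≤ 2 ^ (p - 1) * (a ^ p + b ^ p) := by
  have h := NNReal.rpow_add_le_mul_rpow_add_rpow (a.toNNReal) (b.toNNReal) hp
  have h' := NNReal.coe_le_coe.2 h
  push_cast [NNReal.coe_rpow] at h'
  rw [Real.coe_toNNReal _ ha, Real.coe_toNNReal _ hb] at h'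
  exact h'

private lemma aux_young {p e u v : ℝ} (hp : 1 < p) (he : 0 < e) (hu : 0 ≤ u) (hv : 0 ≤ v) :
    p * u ^ (p - 1) * v ≤ e * u ^ p + ((p - 1) / e) ^ (p - 1) * v ^ p := by
  have hp0 : (0 : ℝ) < p := by linarith
  have hp1 : (0 : ℝ) < p - 1 := by linarith
  rcases eq_or_lt_of_le hv with hv0 | hv
  · rw [← hv0, Real.zero_rpow hp0.ne']
    have : p * u ^ (p - 1) * 0 = 0 := by ring
    rw [this]
    positivity
  rcases eq_or_lt_of_le hu with hu0 | hu
  · rw [← hu0, Real.zero_rpow hp0.ne', Real.zero_rpow hp1.ne']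
    have h1 : p * (0:ℝ) * v = 0 := by ring
    rw [h1]
    positivity
  -- both positive
  set s : ℝ := e * u / ((p - 1) * v) with hs_def
  have hs : 0 ≤ s := by positivity
  have amgm : p * s ^ (p - 1) ≤ (p - 1) * s ^ p + 1 := by
    have h := Real.geom_mean_le_arith_mean2_weighted (w₁ := (p - 1)/p) (w₂ := 1/p)
      (p₁ := s ^ p) (p₂ := 1) (by positivity) (by positivity)
      (by positivity) zero_le_one (by field_simp; ring)
    rw [Real.one_rpow, mul_one, ← Real.rpow_mul hs, mul_one] at h
    have hexp : p * ((p - 1) / p) = p - 1 := by field_simp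
    rw [hexp] at h
    have h2 := mul_le_mul_of_nonneg_left h hp0.le
    calc p * s ^ (p - 1) ≤ p * ((p - 1)/p * s ^ p + 1/p) := h2
      _ = (p - 1) * s ^ p + 1 := by field_simp
  -- expansions
  have hep : e ^ p = e ^ (p - 1) * e := by rw [← Real.rpow_add_one he.ne' (p - 1), sub_add_cancel]
  have hqp : (p - 1) ^ p = (p - 1) ^ (p - 1) * (p - 1) := by
    rw [← Real.rpow_add_one hp1.ne' (p - 1), sub_add_cancel]
  have hvp : v ^ p = v ^ (p - 1) * v := by rw [← Real.rpow_add_one hv.ne' (p - 1), sub_add_cancel]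
  have hup : u ^ p = u ^ (p - 1) * u := by rw [← Real.rpow_add_one hu.ne' (p - 1), sub_add_cancel]
  have hsp : s ^ p = (e ^ (p - 1) * e * (u ^ (p - 1) * u)) / ((p - 1) ^ (p - 1) * (p - 1) * (v ^ (p - 1) * v)) := by
    rw [hs_def, Real.div_rpow (by positivity) (by positivity), Real.mul_rpow he.le hu.le,
      Real.mul_rpow hp1.le hv.le, hep, hvp, hup, hqp]
  have hsp1 : s ^ (p - 1) = (e ^ (p - 1) * u ^ (p - 1)) / ((p - 1) ^ (p - 1) * v ^ (p - 1)) := by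
    rw [hs_def, Real.div_rpow (by positivity) (by positivity), Real.mul_rpow he.le hu.le,
      Real.mul_rpow hp1.le hv.le]
  have hK : ((p - 1) / e) ^ (p - 1) = (p - 1) ^ (p - 1) / e ^ (p - 1) :=
    Real.div_rpow hp1.le he.le (p - 1)
  have hE : (0:ℝ) < e ^ (p - 1) := Real.rpow_pos_of_pos he _
  have hQ : (0:ℝ) < (p - 1) ^ (p - 1) := Real.rpow_pos_of_pos hp1 _
  have hV : (0:ℝ) < v ^ (p - 1) := Real.rpow_pos_of_pos hv _
  have hU : (0:ℝ) < u ^ (p - 1) := Real.rpow_pos_of_pos hu _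
  have hfinal := mul_le_mul_of_nonneg_left amgm
    (by positivity : (0:ℝ) ≤ ((p - 1) ^ (p - 1) / e ^ (p - 1)) * (v ^ (p - 1) * v))
  -- rewrite both sides
  have hL : ((p - 1) ^ (p - 1) / e ^ (p - 1)) * (v ^ (p - 1) * v) * (p * s ^ (p - 1))
      = p * u ^ (p - 1) * v := by
    rw [hsp1]; field_simp
  have hR : ((p - 1) ^ (p - 1) / e ^ (p - 1)) * (v ^ (p - 1) * v) * ((p - 1) * s ^ p + 1)
      = e * u ^ p + ((p - 1) / e) ^ (p - 1) * v ^ p := by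
    rw [hsp, hK, hup, hvp]; field_simp
  rw [hL, hR] at hfinal
  exact hfinal

private lemma aux_ofReal_int {X : Type*} [MeasurableSpace X] (μ : Measure X) (f : X → ℝ)
    (h : ∀ x, 0 ≤ f x) :
    ENNReal.ofReal (∫ x, f x ∂μ) ≤ ∫⁻ x, ENNReal.ofReal (f x) ∂μ := by
  by_cases hi : Integrable f μ
  · rw [MeasureTheory.ofReal_integral_eq_lintegral_ofReal hi (ae_of_all _ h)]
  · rw [integral_undef hi]; simp

private lemma aux_gauss (v : NNReal) (l : ℝ) :
    ∫⁻ u : ℝ, ENNReal.ofReal (Real.exp (l * u)) ∂(ProbabilityTheory.gaussianReal 0 v) =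
      ENNReal.ofReal (Real.exp (l ^ 2 * v / 2)) := by
  by_cases hv : v = 0
  · subst hv
    rw [ProbabilityTheory.gaussianReal_zero_var, lintegral_dirac' _ (by fun_prop)]
    norm_num
  · have hv' : ((v : ℝ)) ≠ 0 := by exact_mod_cast hv
    rw [ProbabilityTheory.gaussianReal_of_var_ne_zero _ hv,
      lintegral_withDensity_eq_lintegral_mul _ (ProbabilityTheory.measurable_gaussianPDF _ _)
        (by fun_prop)]
    have heq : ∀ u : ℝ,
        (ProbabilityTheory.gaussianPDF 0 v * fun u => ENNReal.ofReal (Real.exp (l * u))) u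
          = ENNReal.ofReal (Real.exp (l ^ 2 * v / 2)) * ProbabilityTheory.gaussianPDF (l * v) v u := by
      intro u
      simp only [Pi.mul_apply, ProbabilityTheory.gaussianPDF, ProbabilityTheory.gaussianPDFReal]
      rw [← ENNReal.ofReal_mul (by positivity), ← ENNReal.ofReal_mul (by positivity)]
      congr 1
      have key : Real.exp (-(u - 0) ^ 2 / (2 * v)) * Real.exp (l * u)
          = Real.exp (l ^ 2 * v / 2) * Real.exp (-(u - l * v) ^ 2 / (2 * v)) := by
        rw [← Real.exp_add, ← Real.exp_add]
        congr 1
        field_simp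
        ring
      calc (√(2 * π * v))⁻¹ * Real.exp (-(u - 0) ^ 2 / (2 * v)) * Real.exp (l * u)
          = (√(2 * π * v))⁻¹ * (Real.exp (-(u - 0) ^ 2 / (2 * v)) * Real.exp (l * u)) := by ring
        _ = (√(2 * π * v))⁻¹ * (Real.exp (l ^ 2 * v / 2) * Real.exp (-(u - l * v) ^ 2 / (2 * v))) := by
            rw [key]
        _ = Real.exp (l ^ 2 * v / 2) * ((√(2 * π * v))⁻¹ * Real.exp (-(u - l * v) ^ 2 / (2 * v))) := by
            ring
    rw [lintegral_congr heq, lintegral_const_mul' _ _ ENNReal.ofReal_ne_top,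
      ProbabilityTheory.lintegral_gaussianPDF_eq_one (l * v) hv, mul_one]


set_option maxHeartbeats 1000000 in
/-- Continuity-in-the-initial-condition estimate: for every `ε > 0` there is a constant
`C_ε = 2^(η²) ((η-1)/ε)^(η-1) > 0`, depending only on `ε` and `η`, such that
`E[|X^x_t - X^y_t|] ≤ C_ε |x-y| + ε (x + y + t^η)`. -/
theorem ramsey_lipschitz_type_estimate
    {Ω : Type*} [MeasurableSpace Ω] (P : Measure Ω) [IsProbabilityMeasure P]
    (α μ σ η : ℝ) (hα0 : 0 < α) (hα1 : α < 1) (hμ : 0 < μ) (hσ : 0 < σ)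
    (hη : η = 1 / (1 - α))
    (W : ℝ → Ω → ℝ)
    (hWmeas : Measurable (Function.uncurry W))
    (hW0 : ∀ᵐ ω ∂P, W 0 ω = 0)
    (hWgauss : ∀ s t : ℝ, 0 ≤ s → s ≤ t →
      P.map (fun ω => W t ω - W s ω) =
        ProbabilityTheory.gaussianReal 0 (Real.toNNReal (t - s)))
    (c : ℝ → Ω → ℝ)
    (hcmeas : Measurable (Function.uncurry c))
    (hcnonneg : ∀ t ω, 0 ≤ c t ω)
    (hcint : ∀ᵐ ω ∂P, ∀ t ≥ (0 : ℝ), IntegrableOn (fun s => c s ω) (Ioc 0 t))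
    (G : ℝ → Ω → ℝ)
    (hG : ∀ t ω, G t ω =
      Real.exp ((∫ s in Ioc (0 : ℝ) t, (1 - α) * (μ + c s ω + σ ^ 2 / 2))
        + (1 - α) * σ * W t ω))
    (X : ℝ → ℝ → Ω → ℝ)
    (hX : ∀ x t ω, X x t ω =
      (G t ω) ^ (-η) * (x ^ (1 - α) + (1 - α) * ∫ s in Ioc (0 : ℝ) t, G s ω) ^ η) :
    ∀ ε > (0 : ℝ), ∃ C > (0 : ℝ),
      C = (2 : ℝ) ^ (η ^ 2) * ((η - 1) / ε) ^ (η - 1) ∧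
      ∀ x > (0 : ℝ), ∀ y > (0 : ℝ), ∀ t ≥ (0 : ℝ),
        ∫⁻ ω, ENNReal.ofReal |X x t ω - X y t ω| ∂P
          ≤ ENNReal.ofReal (C * |x - y| + ε * (x + y + t ^ η)) := by
  -- basic constants
  have hα' : (0:ℝ) < 1 - α := by linarith
  have hη1 : 1 < η := by
    rw [hη, lt_div_iff₀ hα', one_mul]; linarith
  have hη0 : (0:ℝ) < η := by linarith
  have hηα : (1 - α) * η = 1 := by rw [hη]; field_simp
  -- measurability of G
  have hWtm : ∀ s : ℝ, Measurable (fun ω => W s ω) := fun s =>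
    hWmeas.comp measurable_prodMk_left
  have hDm : StronglyMeasurable
      (fun q : ℝ × Ω => ∫ s in Ioc (0:ℝ) q.1, (1 - α) * (μ + c s q.2 + σ ^ 2 / 2)) := by
    have h1 : StronglyMeasurable (Function.uncurry
        (fun (q : ℝ × Ω) (s : ℝ) =>
          (Ioc (0:ℝ) q.1).indicator (fun u => (1 - α) * (μ + c u q.2 + σ ^ 2 / 2)) s)) := by
      have heq : Function.uncurry
          (fun (q : ℝ × Ω) (s : ℝ) =>
            (Ioc (0:ℝ) q.1).indicator (fun u => (1 - α) * (μ + c u q.2 + σ ^ 2 / 2)) s)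
          = Set.indicator {p : (ℝ × Ω) × ℝ | 0 < p.2 ∧ p.2 ≤ p.1.1}
              (fun p => (1 - α) * (μ + c p.2 p.1.2 + σ ^ 2 / 2)) := by
        ext p
        show (Ioc (0:ℝ) p.1.1).indicator (fun u => (1 - α) * (μ + c u p.1.2 + σ ^ 2 / 2)) p.2 = _
        by_cases hp : p.2 ∈ Ioc 0 p.1.1
        · rw [Set.indicator_of_mem hp, Set.indicator_of_mem (by simpa [Set.mem_Ioc] using hp)]
        · rw [Set.indicator_of_notMem hp,
            Set.indicator_of_notMem (by simpa [Set.mem_Ioc] using hp)]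
      rw [heq]
      refine (Measurable.indicator ?_ ?_).stronglyMeasurable
      · exact (((hcmeas.comp (measurable_snd.prodMk
          (measurable_snd.comp measurable_fst))).const_add μ).add_const
          (σ ^ 2 / 2)).const_mul (1 - α)
      · exact (measurableSet_lt measurable_const measurable_snd).inter
          (measurableSet_le measurable_snd ((measurable_fst.comp measurable_fst)))
    have h2 := h1.integral_prod_right (ν := (volume : Measure ℝ))
    have heq2 : (fun q : ℝ × Ω => ∫ s in Ioc (0:ℝ) q.1, (1 - α) * (μ + c s q.2 + σ ^ 2 / 2))
        = fun q : ℝ × Ω => ∫ s, (Ioc (0:ℝ) q.1).indicator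
            (fun u => (1 - α) * (μ + c u q.2 + σ ^ 2 / 2)) s := by
      funext q
      rw [integral_indicator measurableSet_Ioc]
    rw [heq2]
    exact h2
  have hGm : Measurable (Function.uncurry G) := by
    have heq : Function.uncurry G = fun q : ℝ × Ω =>
        Real.exp ((∫ s in Ioc (0:ℝ) q.1, (1 - α) * (μ + c s q.2 + σ ^ 2 / 2))
          + (1 - α) * σ * Function.uncurry W q) := funext fun q => hG q.1 q.2
    rw [heq]
    exact (hDm.measurable.add (hWmeas.const_mul _)).exp
  have hGsm : ∀ s : ℝ, Measurable (fun ω => G s ω) := fun s =>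
    hGm.comp measurable_prodMk_left
  have hGpos : ∀ s ω, 0 < G s ω := fun s ω => by rw [hG]; exact Real.exp_pos _
  have hexp_rpow : ∀ w r : ℝ, (Real.exp w) ^ r = Real.exp (w * r) := fun w r => by
    rw [Real.rpow_def_of_pos (Real.exp_pos w), Real.log_exp]
  -- the key moment bound
  have Mgen : ∀ t ≥ (0:ℝ), ∀ s, 0 ≤ s → s ≤ t →
      ∫⁻ ω, (ENNReal.ofReal (G s ω / G t ω)) ^ η ∂P ≤ 1 := by
    intro t ht s hs0 hst
    have hpath : ∀ᵐ ω ∂P, G s ω / G t ω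
        ≤ Real.exp ((1 - α) * (-((μ + σ ^ 2 / 2)) * (t - s) - σ * (W t ω - W s ω))) := by
      filter_upwards [hcint] with ω hcω
      have hci : IntegrableOn (fun u => (1 - α) * (μ + c u ω + σ ^ 2 / 2)) (Ioc 0 t) volume := by
        have h1 : IntegrableOn (fun _ : ℝ => (1 - α) * (μ + σ ^ 2 / 2)) (Ioc 0 t) volume :=
          integrableOn_const (by rw [Real.volume_Ioc]; exact ENNReal.ofReal_ne_top)
        have h2 := (hcω t ht).const_mul (1 - α)
        have heq : (fun u => (1 - α) * (μ + c u ω + σ ^ 2 / 2))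
            = fun u => (1 - α) * (μ + σ ^ 2 / 2) + (1 - α) * c u ω := by funext u; ring
        rw [heq]; exact h1.add h2
      have hci1 : IntegrableOn (fun u => (1 - α) * (μ + c u ω + σ ^ 2 / 2)) (Ioc 0 s) volume :=
        hci.mono_set (Set.Ioc_subset_Ioc_right hst)
      have hci2 : IntegrableOn (fun u => (1 - α) * (μ + c u ω + σ ^ 2 / 2)) (Ioc s t) volume :=
        hci.mono_set (Set.Ioc_subset_Ioc_left hs0)
      have hsplit : (∫ u in Ioc (0:ℝ) t, (1 - α) * (μ + c u ω + σ ^ 2 / 2))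
          = (∫ u in Ioc (0:ℝ) s, (1 - α) * (μ + c u ω + σ ^ 2 / 2))
            + (∫ u in Ioc s t, (1 - α) * (μ + c u ω + σ ^ 2 / 2)) := by
        rw [← setIntegral_union (Set.Ioc_disjoint_Ioc_of_le le_rfl) measurableSet_Ioc hci1 hci2,
          Set.Ioc_union_Ioc_eq_Ioc hs0 hst]
      have hlow : (1 - α) * (μ + σ ^ 2 / 2) * (t - s)
          ≤ ∫ u in Ioc s t, (1 - α) * (μ + c u ω + σ ^ 2 / 2) := by
        have hmono : ∫ u in Ioc s t, (1 - α) * (μ + σ ^ 2 / 2)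
            ≤ ∫ u in Ioc s t, (1 - α) * (μ + c u ω + σ ^ 2 / 2) := by
          refine setIntegral_mono_on (integrableOn_const (by
            rw [Real.volume_Ioc]; exact ENNReal.ofReal_ne_top)) hci2 measurableSet_Ioc ?_
          intro u hu
          have := hcnonneg u ω
          have h1 : μ + σ ^ 2 / 2 ≤ μ + c u ω + σ ^ 2 / 2 := by linarith
          exact mul_le_mul_of_nonneg_left h1 hα'.le
        rw [setIntegral_const, Real.volume_real_Ioc_of_le hst,
          smul_eq_mul] at hmono
        nlinarith [hmono]
      rw [hG s ω, hG t ω, ← Real.exp_sub]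
      apply Real.exp_le_exp.2
      have hW : (∫ u in Ioc (0:ℝ) s, (1 - α) * (μ + c u ω + σ ^ 2 / 2)) + (1 - α) * σ * W s ω
            - ((∫ u in Ioc (0:ℝ) t, (1 - α) * (μ + c u ω + σ ^ 2 / 2)) + (1 - α) * σ * W t ω)
          = -(∫ u in Ioc s t, (1 - α) * (μ + c u ω + σ ^ 2 / 2))
            - (1 - α) * σ * (W t ω - W s ω) := by
        rw [hsplit]; ring
      rw [hW]
      have hexpand : (1 - α) * (-((μ + σ ^ 2 / 2)) * (t - s) - σ * (W t ω - W s ω))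
          = -((1 - α) * (μ + σ ^ 2 / 2) * (t - s)) - (1 - α) * σ * (W t ω - W s ω) := by ring
      rw [hexpand]
      have := hlow
      linarith
    have hint : ∫⁻ ω, ENNReal.ofReal (Real.exp (-σ * (W t ω - W s ω))) ∂P
        = ENNReal.ofReal (Real.exp ((-σ) ^ 2 * ((t - s).toNNReal : ℝ) / 2)) := by
      have hmap : ∫⁻ ω, ENNReal.ofReal (Real.exp (-σ * (W t ω - W s ω))) ∂P
          = ∫⁻ u, ENNReal.ofReal (Real.exp (-σ * u))
              ∂(P.map (fun ω => W t ω - W s ω)) := by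
        exact (lintegral_map (by fun_prop : Measurable fun u : ℝ => ENNReal.ofReal (Real.exp (-σ * u))) ((hWtm t).sub (hWtm s))).symm
      rw [hmap, hWgauss s t hs0 hst, aux_gauss]
    calc ∫⁻ ω, (ENNReal.ofReal (G s ω / G t ω)) ^ η ∂P
        ≤ ∫⁻ ω, ENNReal.ofReal (Real.exp (-((μ + σ ^ 2 / 2)) * (t - s)))
            * ENNReal.ofReal (Real.exp (-σ * (W t ω - W s ω))) ∂P := by
          apply lintegral_mono_ae
          filter_upwards [hpath] with ω hω
          rw [← ENNReal.ofReal_mul (Real.exp_pos _).le, ← Real.exp_add,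
            ENNReal.ofReal_rpow_of_nonneg (div_nonneg (hGpos s ω).le (hGpos t ω).le) hη0.le]
          apply ENNReal.ofReal_le_ofReal
          calc (G s ω / G t ω) ^ η
              ≤ (Real.exp ((1 - α) * (-((μ + σ ^ 2 / 2)) * (t - s) - σ * (W t ω - W s ω)))) ^ η :=
                Real.rpow_le_rpow (div_nonneg (hGpos s ω).le (hGpos t ω).le) hω hη0.le
            _ = Real.exp ((1 - α) * (-((μ + σ ^ 2 / 2)) * (t - s) - σ * (W t ω - W s ω)) * η) :=
                hexp_rpow _ _
            _ = Real.exp (-((μ + σ ^ 2 / 2)) * (t - s) + -σ * (W t ω - W s ω)) := by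
                congr 1
                linear_combination (-((μ + σ ^ 2 / 2)) * (t - s) - σ * (W t ω - W s ω)) * hηα
      _ = ENNReal.ofReal (Real.exp (-((μ + σ ^ 2 / 2)) * (t - s)))
            * ∫⁻ ω, ENNReal.ofReal (Real.exp (-σ * (W t ω - W s ω))) ∂P :=
          lintegral_const_mul' _ _ ENNReal.ofReal_ne_top
      _ ≤ 1 := by
          rw [hint, ← ENNReal.ofReal_mul (Real.exp_pos _).le, ← Real.exp_add]
          refine ENNReal.ofReal_le_one.2 ?_
          rw [Real.exp_le_one_iff]
          have hts : ((t - s).toNNReal : ℝ) = t - s := Real.coe_toNNReal _ (by linarith)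
          rw [hts]
          nlinarith [mul_nonneg hμ.le (sub_nonneg.2 hst)]
  have hGωm : ∀ ω, Measurable fun s => G s ω := fun ω =>
    hGm.comp (measurable_id.prodMk measurable_const)
  -- enter the main statement
  intro ε hε
  have hC : (0:ℝ) < 2 ^ (η ^ 2) * ((η - 1) / ε) ^ (η - 1) :=
    mul_pos (Real.rpow_pos_of_pos two_pos _)
      (Real.rpow_pos_of_pos (div_pos (by linarith) hε) _)
  refine ⟨_, hC, rfl, ?_⟩
  have key : ∀ x y : ℝ, 0 < y → y ≤ x → ∀ t : ℝ, 0 ≤ t →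
      ∫⁻ ω, ENNReal.ofReal |X x t ω - X y t ω| ∂P
        ≤ ENNReal.ofReal ((2 ^ (η ^ 2) * ((η - 1) / ε) ^ (η - 1)) * (x - y) + ε * (x + t ^ η)) := by
    intro x y hy hyx t ht
    have hx : 0 < x := lt_of_lt_of_le hy hyx
    set ε' : ℝ := ε / 2 ^ (η - 1) with hε'def
    have h2pos : (0:ℝ) < 2 ^ (η - 1) := Real.rpow_pos_of_pos two_pos _
    have hε' : 0 < ε' := div_pos hε h2pos
    set Cy : ℝ := ((η - 1) / ε') ^ (η - 1) with hCydef
    have hCy0 : 0 ≤ Cy := Real.rpow_nonneg (div_nonneg (by linarith) hε'.le) _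
    have hIm : Measurable (fun ω => ∫ s in Ioc (0:ℝ) t, G s ω) :=
      (StronglyMeasurable.integral_prod_right (f := fun ω s => G s ω)
        (ν := volume.restrict (Ioc (0:ℝ) t))
        ((hGm.comp measurable_swap).stronglyMeasurable)).measurable
    have hgmeas : Measurable fun ω => (G t ω) ^ (-η) := by
      have h1 := hGsm t
      fun_prop
    have hXm : ∀ z : ℝ, Measurable (fun ω => X z t ω) := by
      intro z
      have heq : (fun ω => X z t ω) = fun ω =>
          (G t ω) ^ (-η) * (z ^ (1 - α) + (1 - α) * ∫ s in Ioc (0:ℝ) t, G s ω) ^ η :=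
        funext fun ω => hX z t ω
      rw [heq]
      have h1 := hGsm t
      fun_prop
    have hI0 : ∀ ω, 0 ≤ (1 - α) * ∫ s in Ioc (0:ℝ) t, G s ω := fun ω =>
      mul_nonneg hα'.le (integral_nonneg fun s => (hGpos s ω).le)
    have hgn : ∀ ω, 0 < (G t ω) ^ (-η) := fun ω => Real.rpow_pos_of_pos (hGpos t ω) _
    have hxpow : (x ^ ((1:ℝ) - α)) ^ η = x := by
      rw [← Real.rpow_mul hx.le, hηα, Real.rpow_one]
    -- pathwise estimates
    have E2 : ∀ ω, X y t ω ≤ X x t ω := by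
      intro ω
      simp only [hX]
      refine mul_le_mul_of_nonneg_left (Real.rpow_le_rpow
        (add_nonneg (Real.rpow_nonneg hy.le _) (hI0 ω))
        (add_le_add_left (Real.rpow_le_rpow hy.le hyx hα'.le) _) hη0.le) (hgn ω).le
    have E1 : ∀ ω, X x t ω - X y t ω ≤ ε' * X x t ω + Cy * (x - y) * (G t ω) ^ (-η) := by
      intro ω
      simp only [hX]
      set I : ℝ := (1 - α) * ∫ s in Ioc (0:ℝ) t, G s ω with hIdef
      have hI := hI0 ω
      rw [← hIdef] at hI
      set A : ℝ := x ^ (1 - α) + I with hA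
      set B : ℝ := y ^ (1 - α) + I with hB
      have hA0 : 0 < A := add_pos_of_pos_of_nonneg (Real.rpow_pos_of_pos hx _) hI
      have hB0 : 0 ≤ B := add_nonneg (Real.rpow_nonneg hy.le _) hI
      have hBA : B ≤ A := add_le_add_left (Real.rpow_le_rpow hy.le hyx hα'.le) I
      have d1 : A ^ η - B ^ η ≤ η * A ^ (η - 1) * (A - B) := aux_diff hη1.le hB0 hBA
      have d2 : A - B ≤ (x - y) ^ ((1:ℝ) - α) := by
        have h5 := aux_sub hα'.le (by linarith) hy.le hyx
        have hAB : A - B = x ^ ((1:ℝ) - α) - y ^ ((1:ℝ) - α) := by rw [hA, hB]; ring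
        linarith
      have d3 : η * A ^ (η - 1) * ((x - y) ^ ((1:ℝ) - α))
          ≤ ε' * A ^ η + Cy * ((x - y) ^ ((1:ℝ) - α)) ^ η :=
        aux_young hη1 hε' hA0.le (Real.rpow_nonneg (by linarith) _)
      have d4 : ((x - y) ^ ((1:ℝ) - α)) ^ η = x - y := by
        rw [← Real.rpow_mul (by linarith : (0:ℝ) ≤ x - y), hηα, Real.rpow_one]
      have d5 : A ^ η - B ^ η ≤ ε' * A ^ η + Cy * (x - y) := by
        have h6 : η * A ^ (η - 1) * (A - B) ≤ η * A ^ (η - 1) * ((x - y) ^ ((1:ℝ) - α)) :=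
          mul_le_mul_of_nonneg_left d2 (by positivity)
        rw [d4] at d3
        linarith
      have h7 := mul_le_mul_of_nonneg_left d5 (hgn ω).le
      calc (G t ω) ^ (-η) * A ^ η - (G t ω) ^ (-η) * B ^ η
          = (G t ω) ^ (-η) * (A ^ η - B ^ η) := by ring
        _ ≤ (G t ω) ^ (-η) * (ε' * A ^ η + Cy * (x - y)) := h7
        _ = ε' * ((G t ω) ^ (-η) * A ^ η) + Cy * (x - y) * (G t ω) ^ (-η) := by ring
    have E3 : ∀ ω, X x t ω ≤ 2 ^ (η - 1) * (x * (G t ω) ^ (-η)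
        + ((1 - α) * ∫ s in Ioc (0:ℝ) t, G s ω) ^ η * (G t ω) ^ (-η)) := by
      intro ω
      simp only [hX]
      have h := aux_two hη1.le (Real.rpow_nonneg hx.le (1 - α)) (hI0 ω)
      rw [hxpow] at h
      calc (G t ω) ^ (-η) * (x ^ ((1:ℝ) - α) + (1 - α) * ∫ s in Ioc (0:ℝ) t, G s ω) ^ η
          ≤ (G t ω) ^ (-η) * (2 ^ (η - 1) * (x + ((1 - α) * ∫ s in Ioc (0:ℝ) t, G s ω) ^ η)) :=
            mul_le_mul_of_nonneg_left h (hgn ω).le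
        _ = 2 ^ (η - 1) * (x * (G t ω) ^ (-η)
            + ((1 - α) * ∫ s in Ioc (0:ℝ) t, G s ω) ^ η * (G t ω) ^ (-η)) := by ring
    -- moment bound for G_t^{-η}
    have M1 : ∫⁻ ω, ENNReal.ofReal ((G t ω) ^ (-η)) ∂P ≤ 1 := by
      have h0 : ∀ᵐ ω ∂P, ENNReal.ofReal ((G t ω) ^ (-η))
          = (ENNReal.ofReal (G 0 ω / G t ω)) ^ η := by
        filter_upwards [hW0] with ω h0
        have hG0 : G 0 ω = 1 := by
          rw [hG, Set.Ioc_self]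
          simp [h0]
        have hreal : (G t ω) ^ (-η) = (G 0 ω / G t ω) ^ η := by
          rw [hG0, Real.div_rpow zero_le_one (hGpos t ω).le, Real.one_rpow,
            Real.rpow_neg (hGpos t ω).le, one_div]
        rw [hreal, ENNReal.ofReal_rpow_of_nonneg (div_nonneg (by rw [hG0]; norm_num)
          (hGpos t ω).le) hη0.le]
      calc ∫⁻ ω, ENNReal.ofReal ((G t ω) ^ (-η)) ∂P
          = ∫⁻ ω, (ENNReal.ofReal (G 0 ω / G t ω)) ^ η ∂P := lintegral_congr_ae h0
        _ ≤ 1 := Mgen t ht 0 le_rfl ht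
    -- moment bound for (I_t/G_t)^η
    have hdivmeas : Measurable (fun p : Ω × ℝ => (ENNReal.ofReal (G p.2 p.1 / G t p.1)) ^ η) := by
      have h1 : Measurable (fun p : Ω × ℝ => G p.2 p.1) := hGm.comp measurable_swap
      have h2 : Measurable (fun p : Ω × ℝ => G t p.1) := (hGsm t).comp measurable_fst
      fun_prop
    have M2 : ∫⁻ ω, ENNReal.ofReal (((1 - α) * ∫ s in Ioc (0:ℝ) t, G s ω) ^ η
        * (G t ω) ^ (-η)) ∂P ≤ (ENNReal.ofReal t) ^ η := by
      have st1 : ∀ ω, ENNReal.ofReal (((1 - α) * ∫ s in Ioc (0:ℝ) t, G s ω) ^ η * (G t ω) ^ (-η))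
          ≤ (∫⁻ s in Ioc (0:ℝ) t, ENNReal.ofReal (G s ω / G t ω)) ^ η := by
        intro ω
        have hIω := hI0 ω
        have heq : ((1 - α) * ∫ s in Ioc (0:ℝ) t, G s ω) ^ η * (G t ω) ^ (-η)
            = (((1 - α) * ∫ s in Ioc (0:ℝ) t, G s ω) / G t ω) ^ η := by
          rw [Real.div_rpow hIω (hGpos t ω).le, Real.rpow_neg (hGpos t ω).le, div_eq_mul_inv]
        rw [heq, ← ENNReal.ofReal_rpow_of_nonneg (div_nonneg hIω (hGpos t ω).le) hη0.le]
        refine ENNReal.rpow_le_rpow ?_ hη0.le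
        have heq2 : ((1 - α) * ∫ s in Ioc (0:ℝ) t, G s ω) / G t ω
            = ∫ s in Ioc (0:ℝ) t, ((1 - α) / G t ω) * G s ω := by
          rw [integral_const_mul]
          ring
        rw [heq2]
        refine le_trans (aux_ofReal_int _ _ (fun s =>
          mul_nonneg (div_nonneg hα'.le (hGpos t ω).le) (hGpos s ω).le)) ?_
        refine lintegral_mono fun s => ENNReal.ofReal_le_ofReal ?_
        have hq : 0 ≤ G s ω / G t ω := div_nonneg (hGpos s ω).le (hGpos t ω).le
        have heq3 : (1 - α) / G t ω * G s ω = (1 - α) * (G s ω / G t ω) := by ring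
        rw [heq3]
        nlinarith [mul_nonneg hα0.le hq]
      have st2 : ∀ ω, (∫⁻ s in Ioc (0:ℝ) t, ENNReal.ofReal (G s ω / G t ω)) ^ η
          ≤ (∫⁻ s in Ioc (0:ℝ) t, (ENNReal.ofReal (G s ω / G t ω)) ^ η)
            * (ENNReal.ofReal t) ^ (η - 1) := by
        intro ω
        have hη1' : η - 1 ≠ 0 := sub_ne_zero.2 hη1.ne'
        have hconj : Real.HolderConjugate η (η / (η - 1)) := by
          exact Real.HolderConjugate.conjExponent hη1
        have hfm : AEMeasurable (fun s => ENNReal.ofReal (G s ω / G t ω))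
            (volume.restrict (Ioc (0:ℝ) t)) :=
          (((hGωm ω).div measurable_const).ennreal_ofReal).aemeasurable
        have hH := ENNReal.lintegral_mul_le_Lp_mul_Lq (volume.restrict (Ioc (0:ℝ) t)) hconj
          hfm (aemeasurable_const (b := (1:ℝ≥0∞)))
        simp only [Pi.mul_apply, mul_one, ENNReal.one_rpow] at hH
        rw [setLIntegral_one, Real.volume_Ioc, sub_zero] at hH
        have h3 := ENNReal.rpow_le_rpow hH hη0.le
        rw [ENNReal.mul_rpow_of_nonneg _ _ hη0.le, ← ENNReal.rpow_mul, ← ENNReal.rpow_mul,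
          show 1 / η * η = 1 by field_simp,
          show 1 / (η / (η - 1)) * η = η - 1 by rw [one_div_div]; field_simp,
          ENNReal.rpow_one] at h3
        exact h3
      calc ∫⁻ ω, ENNReal.ofReal (((1 - α) * ∫ s in Ioc (0:ℝ) t, G s ω) ^ η
            * (G t ω) ^ (-η)) ∂P
          ≤ ∫⁻ ω, (∫⁻ s in Ioc (0:ℝ) t, (ENNReal.ofReal (G s ω / G t ω)) ^ η)
              * (ENNReal.ofReal t) ^ (η - 1) ∂P :=
            lintegral_mono fun ω => (st1 ω).trans (st2 ω)
        _ = (∫⁻ ω, (∫⁻ s in Ioc (0:ℝ) t, (ENNReal.ofReal (G s ω / G t ω)) ^ η) ∂P)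
              * (ENNReal.ofReal t) ^ (η - 1) :=
            lintegral_mul_const' _ _ (ENNReal.rpow_ne_top_of_nonneg (by linarith)
              ENNReal.ofReal_ne_top)
        _ = (∫⁻ s in Ioc (0:ℝ) t, (∫⁻ ω, (ENNReal.ofReal (G s ω / G t ω)) ^ η ∂P))
              * (ENNReal.ofReal t) ^ (η - 1) := by
            rw [lintegral_lintegral_swap hdivmeas.aemeasurable]
        _ ≤ (∫⁻ (_s : ℝ) in Ioc (0:ℝ) t, (1:ℝ≥0∞)) * (ENNReal.ofReal t) ^ (η - 1) := by
            refine mul_le_mul_left (setLIntegral_mono measurable_const ?_) _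
            intro s hs
            exact Mgen t ht s hs.1.le hs.2
        _ = ENNReal.ofReal t * (ENNReal.ofReal t) ^ (η - 1) := by
            rw [setLIntegral_one, Real.volume_Ioc, sub_zero]
        _ = (ENNReal.ofReal t) ^ η := by
            have h9 : (ENNReal.ofReal t) ^ η = (ENNReal.ofReal t) ^ ((1:ℝ) + (η - 1)) := by
              congr 1
              ring
            rw [h9, ENNReal.rpow_add_of_nonneg _ _ zero_le_one (by linarith),
              ENNReal.rpow_one]
    -- integral bound for X^x
    have hXub : ∫⁻ ω, ENNReal.ofReal (X x t ω) ∂P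
        ≤ ENNReal.ofReal (2 ^ (η - 1)) * (ENNReal.ofReal x + (ENNReal.ofReal t) ^ η) := by
      calc ∫⁻ ω, ENNReal.ofReal (X x t ω) ∂P
          ≤ ∫⁻ ω, ENNReal.ofReal (2 ^ (η - 1)) * (ENNReal.ofReal (x * (G t ω) ^ (-η))
              + ENNReal.ofReal (((1 - α) * ∫ s in Ioc (0:ℝ) t, G s ω) ^ η
                * (G t ω) ^ (-η))) ∂P := by
            refine lintegral_mono fun ω => ?_
            refine le_trans (ENNReal.ofReal_le_ofReal (E3 ω)) ?_
            rw [ENNReal.ofReal_mul (by positivity)]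
            exact mul_le_mul_right ENNReal.ofReal_add_le _
        _ = ENNReal.ofReal (2 ^ (η - 1)) * ((∫⁻ ω, ENNReal.ofReal (x * (G t ω) ^ (-η)) ∂P)
              + ∫⁻ ω, ENNReal.ofReal (((1 - α) * ∫ s in Ioc (0:ℝ) t, G s ω) ^ η
                * (G t ω) ^ (-η)) ∂P) := by
            rw [lintegral_const_mul' _ _ ENNReal.ofReal_ne_top,
              lintegral_add_left' ((hgmeas.const_mul x).ennreal_ofReal).aemeasurable]
        _ ≤ ENNReal.ofReal (2 ^ (η - 1)) * (ENNReal.ofReal x * 1 + (ENNReal.ofReal t) ^ η) := by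
            refine mul_le_mul_right (add_le_add ?_ M2) _
            have heq : ∀ ω, ENNReal.ofReal (x * (G t ω) ^ (-η))
                = ENNReal.ofReal x * ENNReal.ofReal ((G t ω) ^ (-η)) := fun ω =>
              ENNReal.ofReal_mul hx.le
            rw [lintegral_congr heq, lintegral_const_mul' _ _ ENNReal.ofReal_ne_top]
            exact mul_le_mul_right M1 _
        _ = ENNReal.ofReal (2 ^ (η - 1)) * (ENNReal.ofReal x + (ENNReal.ofReal t) ^ η) := by
            rw [mul_one]
    -- constant comparison
    have hCyC : Cy ≤ 2 ^ (η ^ 2) * ((η - 1) / ε) ^ (η - 1) := by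
      have h1 : (η - 1) / ε' = ((η - 1) / ε) * 2 ^ (η - 1) := by
        rw [hε'def]
        field_simp
      have h2 : Cy = ((η - 1) / ε) ^ (η - 1) * 2 ^ ((η - 1) * (η - 1)) := by
        rw [hCydef, h1, Real.mul_rpow (div_nonneg (by linarith) hε.le) h2pos.le,
          Real.rpow_mul (by norm_num : (0:ℝ) ≤ 2)]
      rw [h2]
      have h3 : (2:ℝ) ^ ((η - 1) * (η - 1)) ≤ 2 ^ (η ^ 2 : ℝ) := by
        apply Real.rpow_le_rpow_left_iff (by norm_num : (1:ℝ) < 2) |>.2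
        nlinarith
      calc ((η - 1) / ε) ^ (η - 1) * 2 ^ ((η - 1) * (η - 1))
          ≤ ((η - 1) / ε) ^ (η - 1) * 2 ^ (η ^ 2 : ℝ) :=
            mul_le_mul_of_nonneg_left h3 (Real.rpow_nonneg (div_nonneg (by linarith) hε.le) _)
        _ = 2 ^ (η ^ 2) * ((η - 1) / ε) ^ (η - 1) := by
            rw [mul_comm]
    -- final assembly
    calc ∫⁻ ω, ENNReal.ofReal |X x t ω - X y t ω| ∂P
        = ∫⁻ ω, ENNReal.ofReal (X x t ω - X y t ω) ∂P :=
          lintegral_congr fun ω => by rw [abs_of_nonneg (sub_nonneg.2 (E2 ω))]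
      _ ≤ ∫⁻ ω, (ENNReal.ofReal (ε' * X x t ω)
            + ENNReal.ofReal (Cy * (x - y) * (G t ω) ^ (-η))) ∂P :=
          lintegral_mono fun ω => le_trans (ENNReal.ofReal_le_ofReal (E1 ω))
            ENNReal.ofReal_add_le
      _ = (∫⁻ ω, ENNReal.ofReal (ε' * X x t ω) ∂P)
            + ∫⁻ ω, ENNReal.ofReal (Cy * (x - y) * (G t ω) ^ (-η)) ∂P :=
          lintegral_add_left' (((hXm x).const_mul ε').ennreal_ofReal).aemeasurable _
      _ ≤ ENNReal.ofReal (ε * (x + t ^ η)) + ENNReal.ofReal (Cy * (x - y)) := by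
          refine add_le_add ?_ ?_
          · have heq : ∀ ω, ENNReal.ofReal (ε' * X x t ω)
                = ENNReal.ofReal ε' * ENNReal.ofReal (X x t ω) := fun ω =>
              ENNReal.ofReal_mul hε'.le
            rw [lintegral_congr heq, lintegral_const_mul' _ _ ENNReal.ofReal_ne_top]
            refine le_trans (mul_le_mul_right hXub _) ?_
            rw [← mul_assoc, ← ENNReal.ofReal_mul hε'.le]
            have hεe : ε' * 2 ^ (η - 1) = ε := by
              rw [hε'def]
              field_simp
            rw [hεe, ENNReal.ofReal_rpow_of_nonneg ht hη0.le,
              ← ENNReal.ofReal_add hx.le (Real.rpow_nonneg ht _),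
              ← ENNReal.ofReal_mul hε.le]
          · have heq : ∀ ω, ENNReal.ofReal (Cy * (x - y) * (G t ω) ^ (-η))
                = ENNReal.ofReal (Cy * (x - y)) * ENNReal.ofReal ((G t ω) ^ (-η)) := fun ω =>
              ENNReal.ofReal_mul (mul_nonneg hCy0 (by linarith))
            rw [lintegral_congr heq, lintegral_const_mul' _ _ ENNReal.ofReal_ne_top]
            calc ENNReal.ofReal (Cy * (x - y)) * ∫⁻ ω, ENNReal.ofReal ((G t ω) ^ (-η)) ∂P
                ≤ ENNReal.ofReal (Cy * (x - y)) * 1 := mul_le_mul_right M1 _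
              _ = ENNReal.ofReal (Cy * (x - y)) := mul_one _
      _ ≤ ENNReal.ofReal ((2 ^ (η ^ 2) * ((η - 1) / ε) ^ (η - 1)) * (x - y)
            + ε * (x + t ^ η)) := by
          rw [← ENNReal.ofReal_add (by positivity) (mul_nonneg hCy0 (by linarith))]
          refine ENNReal.ofReal_le_ofReal ?_
          have h8 : Cy * (x - y) ≤ (2 ^ (η ^ 2) * ((η - 1) / ε) ^ (η - 1)) * (x - y) :=
            mul_le_mul_of_nonneg_right hCyC (by linarith)
          linarith
  -- deduce the symmetric statement
  intro x hx y hy t ht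
  rcases le_total y x with h | h
  · refine le_trans (key x y hy h t ht) (ENNReal.ofReal_le_ofReal ?_)
    rw [abs_of_nonneg (sub_nonneg.2 h)]
    have h9 : ε * (x + t ^ η) ≤ ε * (x + y + t ^ η) :=
      mul_le_mul_of_nonneg_left (by linarith) hε.le
    linarith
  · have habs : (fun ω => ENNReal.ofReal |X x t ω - X y t ω|)
        = fun ω => ENNReal.ofReal |X y t ω - X x t ω| := by
      funext ω
      rw [abs_sub_comm]
    rw [show (∫⁻ ω, ENNReal.ofReal |X x t ω - X y t ω| ∂P)
        = ∫⁻ ω, ENNReal.ofReal |X y t ω - X x t ω| ∂P from by rw [habs]]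
    refine le_trans (key y x hx h t ht) (ENNReal.ofReal_le_ofReal ?_)
    have habs2 : |x - y| = y - x := by
      rw [abs_sub_comm, abs_of_nonneg (sub_nonneg.2 h)]
    rw [habs2]
    have h9 : ε * (y + t ^ η) ≤ ε * (x + y + t ^ η) :=
      mul_le_mul_of_nonneg_left (by linarith) hε.le
    linarith
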